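/- Let T be a tree and let e, e′ be edges with d(r(e), r(e′)) > d(s(e), s(e′)). Then the extended shadows Z(e) and Z(e′) are disjoint; in particular Z_0(e) ∩ Z_0(e′) = ∅. -/

import Mathlib

namespace TreeStmt

variable {V : Type*} (G : SimpleGraph V)

/-- A ray in a graph: a sequence of vertices with `d(r_i, r_{i+n}) = n`. -/
def IsRay (r : ℕ → V) : Prop := ∀ i n : ℕ, G.dist (r i) (r (i + n)) = n

/-- Two rays are cofinal if they eventually agree after shifts. -/
def Cofinal (r s : ℕ → V) : Prop := ∃ k n : ℕ, ∀ i : ℕ, r (i + k) = s (i + n)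

/-- A ray passes through the (oriented) edge `(u, v)`. -/
def Through (r : ℕ → V) (u v : V) : Prop := ∃ j : ℕ, r j = u ∧ r (j + 1) = v

/-- The cofinality class of the ray `r` belongs to the boundary shadow `Z_B(u,v)`:
some ray cofinal to `r` passes through the edge `(u, v)`. -/
def InZB (r : ℕ → V) (u v : V) : Prop :=
  ∃ s : ℕ → V, IsRay G s ∧ Cofinal r s ∧ Through s u v

/-- The shadow of an edge `(u, v)`: vertices strictly closer to `v` than to `u`. -/
def Z0 (u v : V) : Set V := {w : V | G.dist w v < G.dist w u}


/-- The boundary `∂T`: cofinality classes of rays. -/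
def Boundary : Type _ := Quot (fun r s : {r : ℕ → V // IsRay G r} => Cofinal r.1 s.1)

/-- The boundary shadow `Z_B(u,v)` as a subset of `∂T`. -/
def ZB (u v : V) : Set (Boundary G) :=
  {x : Boundary G | ∃ r : {r : ℕ → V // IsRay G r}, x = Quot.mk _ r ∧ InZB G r.1 u v}

/-- The extended space `T ∪ ∂T`. -/
def Ext : Type _ := V ⊕ Boundary G

/-- The extended shadow `Z(u,v) = Z_0(u,v) ∪ Z_B(u,v)` inside `T ∪ ∂T`. -/
def Z (u v : V) : Set (Ext G) :=
  Sum.inl '' Z0 G u v ∪ Sum.inr '' ZB G u v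

/-- The shadow topology on `T ∪ ∂T`, generated by the extended shadows. -/
def shadowTopology : TopologicalSpace (Ext G) :=
  TopologicalSpace.generateFrom {S : Set (Ext G) | ∃ u v : V, G.Adj u v ∧ S = Z G u v}

end TreeStmt

open TreeStmt

section Auxiliary

open SimpleGraph

variable {V : Type*} {G : SimpleGraph V}

/-- In a tree, any path between two vertices has length equal to the distance. -/
lemma tree_path_length_eq_dist (hT : G.IsTree) {a b : V} (p : G.Walk a b)
    (hp : p.IsPath) : p.length = G.dist a b := by
  classical
  obtain ⟨q, hq⟩ := hT.isConnected.exists_walk_length_eq_dist a b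
  have h1 : q.bypass.length = G.dist a b :=
    le_antisymm (hq ▸ q.length_bypass_le) (SimpleGraph.dist_le _)
  obtain ⟨r, -, hr⟩ := hT.existsUnique_path a b
  rw [hr p hp, ← hr q.bypass q.bypass_isPath, h1]

/-- Every vertex on a geodesic walk lies metrically between the endpoints. -/
lemma geodesic_support_dist (hT : G.IsTree) {a b y : V} (p : G.Walk a b)
    (hlen : p.length = G.dist a b) (hy : y ∈ p.support) :
    G.dist a y + G.dist y b = G.dist a b := by
  classical
  have hsplit : (p.takeUntil y hy).length + (p.dropUntil y hy).length = p.length := by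
    rw [← SimpleGraph.Walk.length_append, p.take_spec hy]
  have h1 : G.dist a y ≤ (p.takeUntil y hy).length := SimpleGraph.dist_le _
  have h2 : G.dist y b ≤ (p.dropUntil y hy).length := SimpleGraph.dist_le _
  have h3 : G.dist a b ≤ G.dist a y + G.dist y b := hT.isConnected.dist_triangle
  omega

/-- A geodesic path exists between any two vertices of a tree. -/
lemma tree_exists_geodesic (hT : G.IsTree) (a b : V) :
    ∃ p : G.Walk a b, p.IsPath ∧ p.length = G.dist a b := by
  classical
  obtain ⟨q, hq⟩ := hT.isConnected.exists_walk_length_eq_dist a b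
  exact ⟨q.bypass, q.bypass_isPath,
    le_antisymm (hq ▸ q.length_bypass_le) (SimpleGraph.dist_le _)⟩

/-- Across an edge of a tree, distances differ by exactly one. -/
lemma tree_step (hT : G.IsTree) {u v : V} (h : G.Adj u v) (w : V) :
    G.dist w u = G.dist w v + 1 ∨ G.dist w v = G.dist w u + 1 := by
  obtain ⟨p, hp, hlen⟩ := tree_exists_geodesic hT w u
  by_cases hv : v ∈ p.support
  · left
    have h1 := geodesic_support_dist hT p hlen hv
    have h2 : G.dist v u = 1 := SimpleGraph.dist_eq_one_iff_adj.mpr h.symm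
    have h3 : G.dist w v ≤ G.dist w v := le_refl _
    have h4 : G.dist w v + G.dist v u = G.dist w u := h1
    have h5 : G.dist w u ≤ G.dist w v + G.dist v u := hT.isConnected.dist_triangle
    omega
  · right
    have hcp : (p.concat h).IsPath := by
      rw [SimpleGraph.Walk.isPath_def, SimpleGraph.Walk.support_concat,
        List.nodup_append]
      exact ⟨hp.support_nodup, List.nodup_singleton v,
        fun a ha b hb hab => hv (by rw [List.mem_singleton] at hb; rw [← hb, ← hab]; exact ha)⟩
    have := tree_path_length_eq_dist hT (p.concat h) hcp
    rw [SimpleGraph.Walk.length_concat, hlen] at this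
    omega

/-- If `w` is on the `v`-side and `x` on the `u`-side of the edge `(u,v)` of a tree,
then the geodesic from `w` to `x` crosses the edge. -/
lemma tree_cross (hT : G.IsTree) {u v w x : V} (h : G.Adj u v)
    (hw : G.dist w v < G.dist w u) (hx : G.dist x u < G.dist x v) :
    G.dist w x = G.dist w v + 1 + G.dist u x := by
  obtain ⟨p, hp, hplen⟩ := tree_exists_geodesic hT w v
  obtain ⟨q, hq, hqlen⟩ := tree_exists_geodesic hT u x
  have hpside : ∀ y ∈ p.support, G.dist y v < G.dist y u := by
    intro y hy
    have h1 := geodesic_support_dist hT p hplen hy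
    have h2 : G.dist w u ≤ G.dist w y + G.dist y u := hT.isConnected.dist_triangle
    omega
  have hqside : ∀ y ∈ q.support, G.dist y u < G.dist y v := by
    intro y hy
    have h1 := geodesic_support_dist hT q hqlen hy
    have h2 : G.dist x v ≤ G.dist x y + G.dist y v := hT.isConnected.dist_triangle
    have h3 : G.dist x u = G.dist u x := SimpleGraph.dist_comm
    have h4 : G.dist x y = G.dist y x := SimpleGraph.dist_comm
    have h5 : G.dist u y = G.dist y u := SimpleGraph.dist_comm
    omega
  set W : G.Walk w x := p.append (SimpleGraph.Walk.cons h.symm q) with hW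
  have hWpath : W.IsPath := by
    rw [SimpleGraph.Walk.isPath_def, hW, SimpleGraph.Walk.support_append,
      SimpleGraph.Walk.support_cons, List.tail_cons, List.nodup_append]
    refine ⟨hp.support_nodup, hq.support_nodup, fun y hy z hz hyz => ?_⟩
    subst hyz
    exact absurd (hqside _ hz) (not_lt.mpr (le_of_lt (hpside _ hy)))
  have hWlen := tree_path_length_eq_dist hT W hWpath
  rw [hW, SimpleGraph.Walk.length_append, SimpleGraph.Walk.length_cons,
    hplen, hqlen] at hWlen
  omega

/-- Core statement: the vertex shadows are disjoint. -/
lemma z0_inter_eq_empty (hT : G.IsTree) {u₁ v₁ u₂ v₂ : V}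
    (h₁ : G.Adj u₁ v₁) (h₂ : G.Adj u₂ v₂)
    (hd : G.dist u₁ u₂ < G.dist v₁ v₂) :
    TreeStmt.Z0 G u₁ v₁ ∩ TreeStmt.Z0 G u₂ v₂ = ∅ := by
  rw [Set.eq_empty_iff_forall_notMem]
  rintro w ⟨hw1, hw2⟩
  have hw1 : G.dist w v₁ < G.dist w u₁ := hw1
  have hw2 : G.dist w v₂ < G.dist w u₂ := hw2
  have c12 : G.dist u₁ u₂ = G.dist u₂ u₁ := SimpleGraph.dist_comm
  have cv : G.dist v₁ v₂ = G.dist v₂ v₁ := SimpleGraph.dist_comm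
  have cvu : G.dist v₁ u₂ = G.dist u₂ v₁ := SimpleGraph.dist_comm
  have h21 : G.dist v₂ u₂ = 1 := SimpleGraph.dist_eq_one_iff_adj.mpr h₂.symm
  have h11 : G.dist v₁ u₁ = 1 := SimpleGraph.dist_eq_one_iff_adj.mpr h₁.symm
  rcases tree_step hT h₁ u₂ with hu2 | hu2
  · -- u₂ on the v₁-side : dist u₂ u₁ = dist u₂ v₁ + 1
    have t1 : G.dist v₁ v₂ ≤ G.dist v₁ u₂ + G.dist u₂ v₂ := hT.isConnected.dist_triangle
    have t2 : G.dist u₂ v₂ = 1 := SimpleGraph.dist_eq_one_iff_adj.mpr h₂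
    omega
  · -- u₂ on the u₁-side : dist u₂ v₁ = dist u₂ u₁ + 1
    rcases tree_step hT h₁ v₂ with hv2 | hv2
    · -- v₂ on the v₁-side
      have t1 : G.dist v₂ u₁ ≤ G.dist v₂ u₂ + G.dist u₂ u₁ := hT.isConnected.dist_triangle
      omega
    · -- v₂ on the u₁-side
      have hu2' : G.dist u₂ u₁ < G.dist u₂ v₁ := by omega
      have hv2' : G.dist v₂ u₁ < G.dist v₂ v₁ := by omega
      have e1 := tree_cross hT h₁ hw1 hu2'
      have e2 := tree_cross hT h₁ hw1 hv2'
      have t1 : G.dist v₁ v₂ ≤ G.dist v₁ u₁ + G.dist u₁ v₂ := hT.isConnected.dist_triangle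
      omega

lemma cofinal_symm {r s : ℕ → V} (h : TreeStmt.Cofinal r s) : TreeStmt.Cofinal s r := by
  obtain ⟨k, n, h⟩ := h; exact ⟨n, k, fun i => (h i).symm⟩

lemma cofinal_trans {r s t : ℕ → V} (h1 : TreeStmt.Cofinal r s)
    (h2 : TreeStmt.Cofinal s t) : TreeStmt.Cofinal r t := by
  obtain ⟨k, n, h⟩ := h1; obtain ⟨k', n', h'⟩ := h2
  refine ⟨k + k', n + n', fun i => ?_⟩
  have e1 := h (i + k'); have e2 := h' (i + n)
  have a1 : i + (k + k') = i + k' + k := by ring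
  have a2 : i + k' + n = i + n + k' := by ring
  have a3 : i + n + n' = i + (n + n') := by ring
  rw [a1, e1, a2, e2, a3]

lemma cofinal_equivalence (G : SimpleGraph V) :
    Equivalence (fun r s : {r : ℕ → V // TreeStmt.IsRay G r} => TreeStmt.Cofinal r.1 s.1) :=
  ⟨fun _ => ⟨0, 0, fun _ => rfl⟩, cofinal_symm, cofinal_trans⟩

/-- Far-out points of a ray through an edge lie in the shadow of the edge. -/
lemma ray_mem_z0 {s : ℕ → V} (hs : TreeStmt.IsRay G s) {u v : V} {j m : ℕ}
    (hj : j + 1 ≤ m) (hu : s j = u) (hv : s (j + 1) = v) :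
    s m ∈ TreeStmt.Z0 G u v := by
  have e1 := hs j (m - j)
  have e2 := hs (j + 1) (m - (j + 1))
  rw [show j + (m - j) = m from by omega] at e1
  rw [show j + 1 + (m - (j + 1)) = m from by omega] at e2
  show G.dist (s m) v < G.dist (s m) u
  have c1 : G.dist (s m) (s j) = G.dist (s j) (s m) := SimpleGraph.dist_comm
  have c2 : G.dist (s m) (s (j + 1)) = G.dist (s (j + 1)) (s m) := SimpleGraph.dist_comm
  rw [← hu, ← hv, c1, c2, e1, e2]
  omega

end Auxiliary


/-- In a tree, if edges `e = (u₁, v₁)` and `e′ = (u₂, v₂)` satisfy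
`d(r(e), r(e′)) > d(s(e), s(e′))`, then the extended shadows `Z(e)` and `Z(e′)` are
disjoint; in particular `Z_0(e) ∩ Z_0(e′) = ∅`. -/
theorem stmt_9 {V : Type*} (G : SimpleGraph V) (hT : G.IsTree)
    (u₁ v₁ u₂ v₂ : V) (h₁ : G.Adj u₁ v₁) (h₂ : G.Adj u₂ v₂)
    (hd : G.dist u₁ u₂ < G.dist v₁ v₂) :
    Disjoint (Z G u₁ v₁) (Z G u₂ v₂) ∧ Z0 G u₁ v₁ ∩ Z0 G u₂ v₂ = ∅ := by
  have hz0 := z0_inter_eq_empty hT h₁ h₂ hd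
  have hz0' : ∀ w, ¬(w ∈ Z0 G u₁ v₁ ∧ w ∈ Z0 G u₂ v₂) := by
    intro w hw
    exact Set.eq_empty_iff_forall_notMem.mp hz0 w ⟨hw.1, hw.2⟩
  refine ⟨?_, hz0⟩
  rw [Set.disjoint_left]
  rintro x (⟨w, hw, rfl⟩ | ⟨b, hb, rfl⟩)
  · rintro (⟨w', hw', hwe⟩ | ⟨b, hb, hbe⟩)
    · exact hz0' w ⟨hw, Sum.inl.inj hwe ▸ hw'⟩
    · cases hbe
  · rintro (⟨w', hw', hwe⟩ | ⟨b', hb', hbe⟩)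
    · cases hwe
    · -- two boundary memberships of the same point
      obtain ⟨r₁, hbr₁, s₁, hs₁, hc₁, j, hj₁, hj₁'⟩ := hb
      have hbe' : b' = b := Sum.inr.inj hbe
      subst hbe'
      obtain ⟨r₂, hbr₂, s₂, hs₂, hc₂, j', hj₂, hj₂'⟩ := hb'
      have hq : Quot.mk _ r₁ = Quot.mk
          (fun r s : {r : ℕ → V // IsRay G r} => Cofinal r.1 s.1) r₂ := by
        rw [← hbr₁, ← hbr₂]
      have hrr : Cofinal r₁.1 r₂.1 := ((cofinal_equivalence G).eqvGen_iff).mp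
        (Quot.eqvGen_exact hq)
      have hss : Cofinal s₁ s₂ :=
        cofinal_trans (cofinal_symm hc₁) (cofinal_trans hrr hc₂)
      obtain ⟨k, n, hkn⟩ := hss
      set i := j + j' + 1 with hi
      have hw₁ : s₁ (i + k) ∈ Z0 G u₁ v₁ :=
        ray_mem_z0 hs₁ (by omega) hj₁ hj₁'
      have hw₂ : s₁ (i + k) ∈ Z0 G u₂ v₂ := by
        rw [hkn i]
        exact ray_mem_z0 hs₂ (by omega) hj₂ hj₂'
      exact hz0' _ ⟨hw₁, hw₂⟩
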